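/- Let Γ be a finite group and A = kΓ its group algebra with trace tr(∑ α_g g) = α_{1}. Then (1/|Γ|)·⟨1⟩ is a multiplicative unit for the diamond operation on the cocenter C(A), and the map φ: C(A) → R(Γ), ⟨a⟩ ↦ (z ↦ tr(a ⋄ z)), is an algebra isomorphism from (C(A), ⋄) to the space of class functions R(Γ) with convolution product (f∘g)(z) = ∑_{y∈Γ} f(zy^{-1})g(y). -/

import Mathlib

open MonoidAlgebra

/-- The submodule of class functions `R(Γ)` on a group `Γ`. -/
def classFun (k Γ : Type*) [Field k] [Group Γ] : Submodule k (Γ → k) where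
  carrier := {f | ∀ g h : Γ, f (h * g * h⁻¹) = f g}
  add_mem' := by
    intro f f' hf hf' g h
    simp [Pi.add_apply, hf g h, hf' g h]
  zero_mem' := by intro g h; rfl
  smul_mem' := by
    intro c f hf g h
    simp [Pi.smul_apply, hf g h]

section St12Aux

set_option linter.unusedSectionVars false

variable {k Γ : Type*} [Field k] [Group Γ] [Fintype Γ] [DecidableEq Γ]

lemma st12_add_apply (a b : MonoidAlgebra k Γ) (x : Γ) : (a + b).coeff x = a.coeff x + b.coeff x := rfl
lemma st12_smul_apply (c : k) (a : MonoidAlgebra k Γ) (x : Γ) : (c • a).coeff x = c * a.coeff x := rfl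
lemma st12_sub_apply (a b : MonoidAlgebra k Γ) (x : Γ) : (a - b).coeff x = a.coeff x - b.coeff x := rfl

lemma st12_mul_apply (f h : MonoidAlgebra k Γ) (x : Γ) :
    (f * h).coeff x = ∑ y : Γ, f.coeff (x * y⁻¹) * h.coeff y := by
  have hh : h = ∑ y : Γ, single y (h.coeff y) := by
    ext a; rw [MonoidAlgebra.coeff_sum]; simp [Finsupp.single_apply]
  conv_lhs => rw [hh]
  rw [Finset.mul_sum, MonoidAlgebra.coeff_sum, Finset.sum_apply']
  exact Finset.sum_congr rfl fun y _ => MonoidAlgebra.coeff_mul_single_apply ..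

def st12F (a : MonoidAlgebra k Γ) (z : Γ) : k := ∑ g : Γ, a.coeff (g * z⁻¹ * g⁻¹)

lemma st12F_class (a : MonoidAlgebra k Γ) (g h : Γ) :
    st12F a (h * g * h⁻¹) = st12F a g := by
  unfold st12F
  refine Fintype.sum_equiv (Equiv.mulRight h) _ _ fun p => ?_
  simp only [Equiv.coe_mulRight]
  congr 1; group

lemma st12F_comm (a b : MonoidAlgebra k Γ) (z : Γ) : st12F (a * b) z = st12F (b * a) z := by
  unfold st12F
  simp only [st12_mul_apply]
  have eq1 : ∑ x : Γ, ∑ y : Γ, a.coeff (x * z⁻¹ * x⁻¹ * y⁻¹) * b.coeff y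
      = ∑ p : Γ × Γ, a.coeff (p.1 * z⁻¹ * p.1⁻¹ * p.2⁻¹) * b.coeff p.2 :=
    (Fintype.sum_prod_type (fun p : Γ × Γ => a.coeff (p.1 * z⁻¹ * p.1⁻¹ * p.2⁻¹) * b.coeff p.2)).symm
  have eq2 : ∑ x : Γ, ∑ y : Γ, b.coeff (x * z⁻¹ * x⁻¹ * y⁻¹) * a.coeff y
      = ∑ p : Γ × Γ, b.coeff (p.1 * z⁻¹ * p.1⁻¹ * p.2⁻¹) * a.coeff p.2 :=
    (Fintype.sum_prod_type (fun p : Γ × Γ => b.coeff (p.1 * z⁻¹ * p.1⁻¹ * p.2⁻¹) * a.coeff p.2)).symm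
  rw [eq1, eq2]
  refine Fintype.sum_equiv ⟨fun p => (p.2 * p.1, p.1 * z⁻¹ * p.1⁻¹ * p.2⁻¹),
    fun p => (p.2 * p.1 * z, p.1 * z⁻¹ * p.1⁻¹ * p.2⁻¹), ?_, ?_⟩ _ _ fun p => ?_
  · rintro ⟨g, t⟩; rw [Prod.mk.injEq]; constructor <;> group
  · rintro ⟨g, t⟩; rw [Prod.mk.injEq]; constructor <;> group
  · simp only [Equiv.coe_fn_mk]
    rw [mul_comm]
    congr 2 <;> group

noncomputable def st12Phi : MonoidAlgebra k Γ →ₗ[k] ↥(classFun k Γ) :=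
  LinearMap.codRestrict (classFun k Γ)
    { toFun := fun a z => ∑ g : Γ, a.coeff (g * z⁻¹ * g⁻¹)
      map_add' := fun a b => funext fun z => by
        simp only [st12_add_apply, Finset.sum_add_distrib]; rfl
      map_smul' := fun c a => funext fun z => by
        simp only [st12_smul_apply, ← Finset.mul_sum]; rfl }
    (fun a g h => st12F_class a g h)

lemma st12Phi_apply (a : MonoidAlgebra k Γ) (z : Γ) :
    (st12Phi a : Γ → k) z = ∑ g : Γ, a.coeff (g * z⁻¹ * g⁻¹) := rfl

noncomputable def st12sigma : ↥(classFun k Γ) →ₗ[k] MonoidAlgebra k Γ where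
  toFun f := MonoidAlgebra.ofCoeff (Finsupp.equivFunOnFinite.symm fun x => (Fintype.card Γ : k)⁻¹ * (f : Γ → k) x⁻¹)
  map_add' f g := by
    ext x
    show (Fintype.card Γ : k)⁻¹ * ((f : Γ → k) x⁻¹ + (g : Γ → k) x⁻¹) = _
    rw [st12_add_apply]; show _ = (Fintype.card Γ : k)⁻¹ * _ + (Fintype.card Γ : k)⁻¹ * _
    ring
  map_smul' c f := by
    ext x
    show (Fintype.card Γ : k)⁻¹ * (c * (f : Γ → k) x⁻¹) = _
    rw [RingHom.id_apply, st12_smul_apply]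
    show _ = c * ((Fintype.card Γ : k)⁻¹ * _)
    ring

lemma st12sigma_apply (f : ↥(classFun k Γ)) (x : Γ) :
    (st12sigma f).coeff x = (Fintype.card Γ : k)⁻¹ * (f : Γ → k) x⁻¹ := rfl

lemma st12F_diam (a b : MonoidAlgebra k Γ) (z : Γ) :
    st12F (∑ h : Γ, a * single h 1 * b * single h⁻¹ 1) z
      = ∑ y : Γ, st12F a (z * y⁻¹) * st12F b y := by
  have tripl : ∀ F : Γ → Γ → Γ → k,
      ∑ p : Γ × Γ × Γ, F p.1 p.2.1 p.2.2 = ∑ x : Γ, ∑ y : Γ, ∑ w : Γ, F x y w := by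
    intro F
    rw [Fintype.sum_prod_type]
    exact Finset.sum_congr rfl fun x _ => Fintype.sum_prod_type _
  unfold st12F
  have lhs1 : ∀ x : Γ, ((∑ h : Γ, a * single h 1 * b * single h⁻¹ 1 : MonoidAlgebra k Γ)).coeff x
      = ∑ h : Γ, ∑ y : Γ, a.coeff (x * h * y⁻¹ * h⁻¹) * b.coeff y := by
    intro x
    rw [MonoidAlgebra.coeff_sum, Finset.sum_apply']
    refine Finset.sum_congr rfl fun h _ => ?_
    rw [MonoidAlgebra.coeff_mul_single_apply, inv_inv, mul_one, st12_mul_apply]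
    refine Finset.sum_congr rfl fun y _ => ?_
    rw [MonoidAlgebra.coeff_mul_single_apply, mul_one]
  simp only [lhs1]
  simp only [Finset.sum_mul, Finset.mul_sum]
  rw [← tripl (fun g h y => a.coeff (g * z⁻¹ * g⁻¹ * h * y⁻¹ * h⁻¹) * b.coeff y),
    ← tripl (fun y h g => a.coeff (g * (z * y⁻¹)⁻¹ * g⁻¹) * b.coeff (h * y⁻¹ * h⁻¹))]
  refine Fintype.sum_equiv
    ⟨fun p => (p.1⁻¹ * p.2.1 * p.2.2⁻¹ * p.2.1⁻¹ * p.1, p.2.2 * p.2.1⁻¹ * p.1,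
        p.2.1 * p.2.2 * p.2.1⁻¹ * p.1),
      fun p => (p.2.2 * p.1, p.2.2 * p.2.1⁻¹, p.2.1 * p.1⁻¹ * p.2.1⁻¹), ?_, ?_⟩ _ _ fun p => ?_
  · rintro ⟨g, h, y⟩
    simp only [Prod.mk.injEq]
    refine ⟨by group, by group, by group⟩
  · rintro ⟨Y, G, H⟩
    simp only [Prod.mk.injEq]
    refine ⟨by group, by group, by group⟩
  · simp only [Equiv.coe_fn_mk]
    congr 1 <;> (congr 1; group)

variable [CharZero k]

lemma st12_card_ne : (Fintype.card Γ : k) ≠ 0 := Nat.cast_ne_zero.mpr Fintype.card_ne_zero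

lemma st12sigma_phi_single (h : Γ) (c : k) :
    st12sigma (st12Phi (single h c)) =
      (Fintype.card Γ : k)⁻¹ • ∑ g : Γ, (single (g⁻¹ * h * g) c : MonoidAlgebra k Γ) := by
  ext x
  rw [st12sigma_apply, st12_smul_apply, MonoidAlgebra.coeff_sum, Finset.sum_apply']
  show (Fintype.card Γ : k)⁻¹ * (∑ g : Γ, (single h c : MonoidAlgebra k Γ).coeff (g * (x⁻¹)⁻¹ * g⁻¹)) = _
  congr 1
  refine Finset.sum_congr rfl fun g _ => ?_
  rw [inv_inv]
  rw [MonoidAlgebra.single_apply, MonoidAlgebra.single_apply]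
  by_cases hc : g⁻¹ * h * g = x
  · rw [if_pos (show h = g * x * g⁻¹ by rw [← hc]; group), if_pos hc]
  · rw [if_neg (fun e => hc (by rw [e]; group)), if_neg hc]

lemma st12_helper (L : MonoidAlgebra k Γ →ₗ[k] MonoidAlgebra k Γ)
    (J : Submodule k (MonoidAlgebra k Γ))
    (hs : ∀ (h : Γ) (c : k), L (single h c) ∈ J) (a : MonoidAlgebra k Γ) : L a ∈ J := by
  induction a using MonoidAlgebra.induction_linear with
  | zero => rw [map_zero]; exact J.zero_mem
  | add f g hf hg => rw [map_add]; exact J.add_mem hf hg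
  | single h c => exact hs h c

lemma st12_item8 (J : Submodule k (MonoidAlgebra k Γ))
    (hJ : J = Submodule.span k
      {x : MonoidAlgebra k Γ | ∃ y z : MonoidAlgebra k Γ, x = y * z - z * y})
    (a : MonoidAlgebra k Γ) : a - st12sigma (st12Phi a) ∈ J := by
  have hcomm : ∀ y z : MonoidAlgebra k Γ, y * z - z * y ∈ J := fun y z => by
    rw [hJ]; exact Submodule.subset_span ⟨y, z, rfl⟩
  have := st12_helper (LinearMap.id - st12sigma ∘ₗ st12Phi) J (fun h c => ?_) a
  · simpa using this
  · simp only [LinearMap.sub_apply, LinearMap.id_apply, LinearMap.comp_apply]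
    rw [st12sigma_phi_single]
    have key : (single h c : MonoidAlgebra k Γ)
          - (Fintype.card Γ : k)⁻¹ • ∑ g : Γ, (single (g⁻¹ * h * g) c : MonoidAlgebra k Γ)
        = (Fintype.card Γ : k)⁻¹ •
            ∑ g : Γ, ((single h c : MonoidAlgebra k Γ) - single (g⁻¹ * h * g) c) := by
      rw [Finset.sum_sub_distrib, smul_sub, Finset.sum_const, Finset.card_univ,
        ← Nat.cast_smul_eq_nsmul k, smul_smul, inv_mul_cancel₀ st12_card_ne, one_smul]
    rw [key]
    refine J.smul_mem _ (J.sum_mem fun g _ => ?_)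
    have e : (single h c : MonoidAlgebra k Γ) - single (g⁻¹ * h * g) c
        = single (h * g) c * single g⁻¹ 1 - single g⁻¹ 1 * single (h * g) c := by
      rw [MonoidAlgebra.single_mul_single, MonoidAlgebra.single_mul_single,
        mul_inv_cancel_right, mul_one, one_mul, mul_assoc]
    rw [e]; exact hcomm _ _

end St12Aux

/-- For the group algebra `A = kΓ` with trace `tr(∑ α_g g) = α_1`: the element
`(1/|Γ|)⟨1⟩` is a unit for the diamond operation on the cocenter `C(A)`, and
`φ : C(A) → R(Γ)`, `⟨a⟩ ↦ (z ↦ tr(a ⋄ z))`, is an algebra isomorphism onto the class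
functions with the convolution product. -/
theorem stmt12 {k Γ : Type*} [Field k] [CharZero k] [Group Γ] [Fintype Γ] [DecidableEq Γ]
    (diam : MonoidAlgebra k Γ → MonoidAlgebra k Γ → MonoidAlgebra k Γ)
    (hdiam : ∀ a b, diam a b = ∑ g : Γ, a * single g 1 * b * single g⁻¹ 1)
    (J : Submodule k (MonoidAlgebra k Γ))
    (hJ : J = Submodule.span k
      {x : MonoidAlgebra k Γ | ∃ y z : MonoidAlgebra k Γ, x = y * z - z * y})
    (u : MonoidAlgebra k Γ)
    (hu : u = ((Fintype.card Γ : k)⁻¹) • (1 : MonoidAlgebra k Γ)) :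
    (∀ a : MonoidAlgebra k Γ,
      (Submodule.Quotient.mk (diam u a) : MonoidAlgebra k Γ ⧸ J) = Submodule.Quotient.mk a) ∧
    (∀ a : MonoidAlgebra k Γ,
      (Submodule.Quotient.mk (diam a u) : MonoidAlgebra k Γ ⧸ J) = Submodule.Quotient.mk a) ∧
    (∃ ψ : (MonoidAlgebra k Γ ⧸ J) ≃ₗ[k] classFun k Γ,
      (∀ (a : MonoidAlgebra k Γ) (z : Γ),
        (ψ (Submodule.Quotient.mk a) : Γ → k) z = (diam a (single z 1)).coeff 1) ∧
      (∀ (a b : MonoidAlgebra k Γ) (z : Γ),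
        (ψ (Submodule.Quotient.mk (diam a b)) : Γ → k) z
          = ∑ y : Γ, (ψ (Submodule.Quotient.mk a) : Γ → k) (z * y⁻¹) *
              (ψ (Submodule.Quotient.mk b) : Γ → k) y)) := by
  have hc : (Fintype.card Γ : k) ≠ 0 := st12_card_ne
  have hcomm : ∀ y z : MonoidAlgebra k Γ, y * z - z * y ∈ J := fun y z => by
    rw [hJ]; exact Submodule.subset_span ⟨y, z, rfl⟩
  refine ⟨?_, ?_, ?_⟩
  · -- left unit
    intro a
    rw [Submodule.Quotient.eq]
    have h1 : diam u a = (Fintype.card Γ : k)⁻¹ • ∑ g : Γ, single g 1 * a * single g⁻¹ 1 := by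
      rw [hdiam, hu, Finset.smul_sum]
      exact Finset.sum_congr rfl fun g _ => by
        rw [smul_mul_assoc, smul_mul_assoc, smul_mul_assoc, one_mul]
    have h2 : (Fintype.card Γ : k)⁻¹ • ∑ g : Γ, (single g 1 * a * single g⁻¹ 1 - a)
        = diam u a - a := by
      rw [Finset.sum_sub_distrib, smul_sub, ← h1, Finset.sum_const, Finset.card_univ,
        ← Nat.cast_smul_eq_nsmul k, smul_smul, inv_mul_cancel₀ hc, one_smul]
    rw [← h2]
    refine J.smul_mem _ (J.sum_mem fun g _ => ?_)
    have e : single g 1 * a * single g⁻¹ 1 - a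
        = single g 1 * (a * single g⁻¹ 1) - (a * single g⁻¹ 1) * single g 1 := by
      rw [mul_assoc]
      congr 1
      rw [mul_assoc, MonoidAlgebra.single_mul_single, inv_mul_cancel, one_mul,
        ← MonoidAlgebra.one_def, mul_one]
    rw [e]; exact hcomm _ _
  · -- right unit
    intro a
    have e : diam a u = a := by
      rw [hdiam, hu]
      have e1 : ∀ g : Γ, a * single g 1 * ((Fintype.card Γ : k)⁻¹ • 1) * single g⁻¹ 1
          = (Fintype.card Γ : k)⁻¹ • a := by
        intro g
        rw [mul_smul_comm, mul_one, smul_mul_assoc, mul_assoc,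
          MonoidAlgebra.single_mul_single, mul_inv_cancel, one_mul,
          ← MonoidAlgebra.one_def, mul_one]
      simp only [e1]
      rw [Finset.sum_const, Finset.card_univ, ← Nat.cast_smul_eq_nsmul k, smul_smul,
        mul_inv_cancel₀ hc, one_smul]
    rw [e]
  · -- isomorphism
    have hker : J ≤ LinearMap.ker st12Phi := by
      rw [hJ, Submodule.span_le]
      rintro x ⟨y, zz, rfl⟩
      simp only [SetLike.mem_coe, LinearMap.mem_ker, map_sub, sub_eq_zero]
      exact Subtype.ext (funext fun z => st12F_comm y zz z)
    refine ⟨LinearEquiv.ofLinear (J.liftQ st12Phi hker) (J.mkQ ∘ₗ st12sigma) ?_ ?_, ?_, ?_⟩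
    · -- right inverse
      refine LinearMap.ext fun f => Subtype.ext (funext fun z => ?_)
      show ∑ g : Γ, (st12sigma f).coeff (g * z⁻¹ * g⁻¹) = (f : Γ → k) z
      have e1 : ∀ g : Γ, (st12sigma f).coeff (g * z⁻¹ * g⁻¹)
          = (Fintype.card Γ : k)⁻¹ * (f : Γ → k) z := by
        intro g
        rw [st12sigma_apply]
        congr 1
        rw [show (g * z⁻¹ * g⁻¹)⁻¹ = g * z * g⁻¹ by group, f.2 z g]
      simp only [e1]
      rw [Finset.sum_const, Finset.card_univ, nsmul_eq_mul, ← mul_assoc,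
        mul_inv_cancel₀ hc, one_mul]
    · -- left inverse
      refine Submodule.linearMap_qext _ (LinearMap.ext fun a => ?_)
      show Submodule.Quotient.mk (st12sigma (st12Phi a)) = Submodule.Quotient.mk a
      rw [Submodule.Quotient.eq]
      simpa [neg_sub] using J.neg_mem (st12_item8 J hJ a)
    · -- formula
      intro a z
      show (st12Phi a : Γ → k) z = _
      rw [st12Phi_apply, hdiam, MonoidAlgebra.coeff_sum, Finset.sum_apply']
      refine Finset.sum_congr rfl fun g _ => ?_
      rw [MonoidAlgebra.mul_single_apply, MonoidAlgebra.mul_single_apply,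
        MonoidAlgebra.mul_single_apply, mul_one, mul_one, mul_one]
      congr 1
      group
    · -- multiplicativity
      intro a b z
      show st12F (diam a b) z = ∑ y : Γ, st12F a (z * y⁻¹) * st12F b y
      rw [hdiam]
      exact st12F_diam a b z
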